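/- Let n ≥ 1 be real and A ∈ ℝ. On the space of 3×3 real matrices with Frobenius inner product ⟨X, Y⟩ = tr(Xᵀ·Y), define Φ(σ) = (2A/(3(n+1)))·σ_vM(σ)^{n+1}, where σ_vM(σ) = √((3/2)·⟨dev(σ), dev(σ)⟩) and dev(σ) = σ − (tr(σ)/3)·I. Then at every σ with dev(σ) ≠ 0, Φ is Fréchet differentiable and its gradient (with respect to this inner product) equals the Norton creep map: ∇Φ(σ) = A·dev(σ)·σ_vM(σ)^{n−1}. In other words, Norton's law derives from the potential Φ. -/

import Mathlib

open Matrix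

attribute [local instance] Matrix.frobeniusNormedAddCommGroup Matrix.frobeniusNormedSpace

/-- Stress deviator `dev σ = σ − (tr σ / 3)·I`. -/
noncomputable def dev (σ : Matrix (Fin 3) (Fin 3) ℝ) : Matrix (Fin 3) (Fin 3) ℝ :=
  σ - (Matrix.trace σ / 3) • (1 : Matrix (Fin 3) (Fin 3) ℝ)

/-- Von Mises equivalent stress `σ_vM = √((3/2)·⟨dev σ, dev σ⟩)` with the
Frobenius inner product `⟨X, Y⟩ = tr (Xᵀ·Y)`. -/
noncomputable def vonMises (σ : Matrix (Fin 3) (Fin 3) ℝ) : ℝ :=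
  Real.sqrt ((3 / 2) * Matrix.trace ((dev σ)ᵀ * dev σ))

/-- Norton creep map `N(σ) = A·dev(σ)·σ_vM(σ)^{n−1}`. -/
noncomputable def nortonMap (A n : ℝ) (σ : Matrix (Fin 3) (Fin 3) ℝ) :
    Matrix (Fin 3) (Fin 3) ℝ :=
  (A * vonMises σ ^ (n - 1)) • dev σ

/-- Entry of the deviator, as a continuous linear functional. -/
noncomputable def devEntry (i j : Fin 3) : Matrix (Fin 3) (Fin 3) ℝ →L[ℝ] ℝ :=
  LinearMap.toContinuousLinearMap
    { toFun := fun M => dev M i j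
      map_add' := by
        intro M N
        simp [dev, Matrix.trace_add, add_smul, Matrix.sub_apply, Matrix.add_apply,
          Matrix.smul_apply]
        ring
      map_smul' := by
        intro c M
        simp [dev, Matrix.trace_smul, Matrix.sub_apply, Matrix.smul_apply, smul_eq_mul]
        ring }

@[simp] lemma devEntry_apply (i j : Fin 3) (M : Matrix (Fin 3) (Fin 3) ℝ) :
    devEntry i j M = dev M i j := rfl

lemma trace_dev_mul (X Y : Matrix (Fin 3) (Fin 3) ℝ) :
    Matrix.trace (Xᵀ * Y) = ∑ p : Fin 3 × Fin 3, X p.1 p.2 * Y p.1 p.2 := by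
  simp only [Matrix.trace, Matrix.diag, Matrix.mul_apply, Matrix.transpose_apply,
    Fintype.sum_prod_type]
  rw [Finset.sum_comm]

lemma trace_dev_self (σ : Matrix (Fin 3) (Fin 3) ℝ) : Matrix.trace (dev σ) = 0 := by
  simp [dev, Matrix.trace_sub, Matrix.trace_smul, Matrix.trace_one]

theorem stmt_10 (n A : ℝ) (hn : 1 ≤ n)
    (σ : Matrix (Fin 3) (Fin 3) ℝ) (hσ : dev σ ≠ 0) :
    ∃ L : Matrix (Fin 3) (Fin 3) ℝ →L[ℝ] ℝ,
      HasFDerivAt (fun τ => (2 * A / (3 * (n + 1))) * vonMises τ ^ (n + 1)) L σ ∧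
      ∀ τ : Matrix (Fin 3) (Fin 3) ℝ, L τ = Matrix.trace ((nortonMap A n σ)ᵀ * τ) := by
  classical
  set c : ℝ := 2 * A / (3 * (n + 1)) with hc
  -- the quadratic form u τ = (3/2) tr(dev τᵀ dev τ) as a sum of squares
  set u : Matrix (Fin 3) (Fin 3) ℝ → ℝ :=
    fun τ => (3 / 2) * Matrix.trace ((dev τ)ᵀ * dev τ) with hu
  have husum : ∀ τ, u τ = (3 / 2) * ∑ p : Fin 3 × Fin 3, dev τ p.1 p.2 * dev τ p.1 p.2 := by
    intro τ
    show (3 / 2) * Matrix.trace ((dev τ)ᵀ * dev τ) = _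
    rw [trace_dev_mul]
  have hupos : 0 < u σ := by
    rw [husum]
    have h1 : 0 < ∑ p : Fin 3 × Fin 3, dev σ p.1 p.2 * dev σ p.1 p.2 := by
      obtain ⟨i, j, hij⟩ : ∃ i j, dev σ i j ≠ 0 := by
        by_contra h
        push_neg at h
        exact hσ (by ext i j; simpa using h i j)
      refine Finset.sum_pos' (fun p _ => mul_self_nonneg _) ⟨(i, j), Finset.mem_univ _, ?_⟩
      exact mul_self_pos.mpr hij
    linarith
  have hunonneg : ∀ τ, 0 ≤ u τ := by
    intro τ
    rw [husum]
    have : 0 ≤ ∑ p : Fin 3 × Fin 3, dev τ p.1 p.2 * dev τ p.1 p.2 :=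
      Finset.sum_nonneg fun p _ => mul_self_nonneg _
    linarith
  -- derivative of u
  set U : Matrix (Fin 3) (Fin 3) ℝ →L[ℝ] ℝ :=
    (3 / 2 : ℝ) • ∑ p : Fin 3 × Fin 3,
      (2 * devEntry p.1 p.2 σ) • (devEntry p.1 p.2) with hU
  have hudiff : HasFDerivAt u U σ := by
    have hsum : HasFDerivAt
        (fun τ => ∑ p : Fin 3 × Fin 3, devEntry p.1 p.2 τ * devEntry p.1 p.2 τ)
        (∑ p : Fin 3 × Fin 3, (2 * devEntry p.1 p.2 σ) • (devEntry p.1 p.2)) σ := by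
      apply HasFDerivAt.fun_sum
      intro p _
      have h := (devEntry p.1 p.2).hasFDerivAt (x := σ)
      have := h.fun_mul h
      convert this using 1
      rw [two_mul, add_smul]
      exact Iff.rfl
    have h2 := hsum.const_mul (3 / 2 : ℝ)
    rw [hU]
    have hu2 : u = fun y => 3 / 2 * ∑ p : Fin 3 × Fin 3, devEntry p.1 p.2 y * devEntry p.1 p.2 y := by
      funext τ
      rw [husum]
      simp
    rw [hu2]
    exact h2
  -- outer function x ↦ x ^ ((n+1)/2)
  have hfun : (fun τ => c * vonMises τ ^ (n + 1)) = fun τ => c * u τ ^ ((n + 1) / 2) := by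
    funext τ
    have h0 : 0 ≤ u τ := hunonneg τ
    rw [vonMises, Real.sqrt_eq_rpow]
    show c * ((u τ) ^ ((1 : ℝ)/2)) ^ (n + 1) = _
    rw [← Real.rpow_mul h0]
    congr 1
    · ring_nf
  have hrpow : HasDerivAt (fun x : ℝ => x ^ ((n + 1) / 2))
      (((n + 1) / 2) * u σ ^ ((n + 1) / 2 - 1)) (u σ) :=
    Real.hasDerivAt_rpow_const (Or.inl (ne_of_gt hupos))
  have hcomp := (hrpow.comp_hasFDerivAt σ hudiff).const_mul c
  refine ⟨c • ((n + 1) / 2 * u σ ^ ((n + 1) / 2 - 1)) • U, ?_, ?_⟩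
  · rw [hfun]
    exact hcomp
  · intro τ
    have hdevtr : Matrix.trace ((dev σ)ᵀ * dev τ) = Matrix.trace ((dev σ)ᵀ * τ) := by
      have h1 : dev τ = τ - (Matrix.trace τ / 3) • (1 : Matrix (Fin 3) (Fin 3) ℝ) := rfl
      have h2 : Matrix.trace ((dev σ)ᵀ) = 0 := by
        rw [Matrix.trace_transpose]; exact trace_dev_self σ
      rw [h1, Matrix.mul_sub, Matrix.trace_sub, Matrix.mul_smul, Matrix.trace_smul,
        Matrix.mul_one, h2]
      simp
    have hUτ : U τ = 3 * Matrix.trace ((dev σ)ᵀ * τ) := by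
      rw [hU]
      simp only [ContinuousLinearMap.coe_smul', Pi.smul_apply, ContinuousLinearMap.coe_sum',
        Finset.sum_apply, ContinuousLinearMap.coe_smul, devEntry_apply, smul_eq_mul]
      rw [← hdevtr, trace_dev_mul, Finset.mul_sum, Finset.mul_sum]
      exact Finset.sum_congr rfl fun p _ => by ring
    have hvm : vonMises σ ^ (n - 1) = u σ ^ ((n - 1) / 2) := by
      rw [vonMises, Real.sqrt_eq_rpow]
      show ((u σ) ^ ((1 : ℝ)/2)) ^ (n - 1) = _
      rw [← Real.rpow_mul (hunonneg σ)]
      congr 1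
      ring
    have hexp : u σ ^ ((n + 1) / 2 - 1) = u σ ^ ((n - 1) / 2) := by
      congr 1
      ring
    have hRHS : Matrix.trace ((nortonMap A n σ)ᵀ * τ)
        = A * vonMises σ ^ (n - 1) * Matrix.trace ((dev σ)ᵀ * τ) := by
      rw [nortonMap, Matrix.transpose_smul, Matrix.smul_mul, Matrix.trace_smul, smul_eq_mul]
    rw [hRHS, hvm]
    simp only [ContinuousLinearMap.coe_smul', Pi.smul_apply, smul_eq_mul]
    rw [hUτ, hexp, hc]
    have hn1 : n + 1 ≠ 0 := by linarith
    field_simp
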